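/- Under the setup of Theorem 1 (two Kalman filters with gains $K_t$ and $\tilde{K}_t$ receiving measurements $z_t$ and $z_t + \epsilon_t$ respectively), if $m_0 = \tilde{m}_0$ and $K_t = \tilde{K}_t$ for all $t \ge 1$, then the separation satisfies $m_t - \tilde{m}_t = -\tilde{K}_t \epsilon_t + \sum_{i=0}^{t-2} \Big(\prod_{j=0}^{i} (F - \tilde{K}_{t-j} H F)\Big) (-\tilde{K}_{t-1-i} \epsilon_{t-1-i})$; in particular $m_t - \tilde{m}_t$ does not depend on the measurements $z_1, \ldots, z_t$ or on the control inputs $u_0, \ldots, u_{t-1}$. -/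

import Mathlib

theorem stmt_3
    (F B H : Matrix (Fin 2) (Fin 2) ℝ)
    (K Kt : ℕ → Matrix (Fin 2) (Fin 2) ℝ)
    (m mt : ℕ → Fin 2 → ℝ)
    (z ε u : ℕ → Fin 2 → ℝ)
    (hm : ∀ t : ℕ, 1 ≤ t →
      m t = (1 - K t * H).mulVec (F.mulVec (m (t - 1)) + B.mulVec (u (t - 1)))
              + (K t).mulVec (z t))
    (hmt : ∀ t : ℕ, 1 ≤ t →
      mt t = (1 - Kt t * H).mulVec (F.mulVec (mt (t - 1)) + B.mulVec (u (t - 1)))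
              + (Kt t).mulVec (z t + ε t))
    (h0 : m 0 = mt 0)
    (hKeq : ∀ t : ℕ, 1 ≤ t → K t = Kt t) :
    ∀ t : ℕ, 1 ≤ t →
      m t - mt t =
        -((Kt t).mulVec (ε t))
          + ∑ i ∈ Finset.range (t - 1),
              ((((List.range (i + 1)).map (fun j => F - Kt (t - j) * H * F)).prod).mulVec
                (-((Kt (t - 1 - i)).mulVec (ε (t - 1 - i))))) := by
  have hd : ∀ t : ℕ, 1 ≤ t →
      m t - mt t = (F - Kt t * H * F).mulVec (m (t-1) - mt (t-1)) - (Kt t).mulVec (ε t) := by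
    intro t ht
    rw [hm t ht, hmt t ht, hKeq t ht]
    have h1 : (F - Kt t * H * F) = (1 - Kt t * H) * F := by rw [sub_mul, one_mul]
    rw [h1, ← Matrix.mulVec_mulVec]
    simp only [Matrix.mulVec_add, Matrix.mulVec_sub]
    abel
  intro t ht
  induction t, ht using Nat.le_induction with
  | base =>
    rw [hd 1 le_rfl]
    simp [h0]
  | succ t ht ih =>
    rw [hd (t+1) (by omega)]
    simp only [Nat.add_sub_cancel]
    rw [ih]
    have ht' : t = (t - 1) + 1 := by omega
    rw [ht', Finset.sum_range_succ']
    rw [← ht']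
    set A := F - Kt (t+1) * H * F with hA
    have hsum : ∀ (s : Finset ℕ) (f : ℕ → Fin 2 → ℝ),
        A.mulVec (∑ i ∈ s, f i) = ∑ i ∈ s, A.mulVec (f i) := by
      intro s f
      simp only [← Matrix.mulVecLin_apply]
      exact map_sum A.mulVecLin f s
    rw [Matrix.mulVec_add, hsum]
    have e0 : ((List.range (0 + 1)).map (fun j => F - Kt (t + 1 - j) * H * F)).prod = A := by
      norm_num [hA, List.range_succ]
    rw [e0]
    have e1 : ∀ i ∈ Finset.range (t-1),
        A.mulVec ((((List.range (i + 1)).map (fun j => F - Kt (t - j) * H * F)).prod).mulVec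
            (-((Kt (t - 1 - i)).mulVec (ε (t - 1 - i)))))
        = (((List.range (i + 1 + 1)).map (fun j => F - Kt (t + 1 - j) * H * F)).prod).mulVec
            (-((Kt (t + 1 - 1 - (i + 1))).mulVec (ε (t + 1 - 1 - (i + 1))))) := by
      intro i hi
      have hr : List.range (i + 1 + 1) = 0 :: (List.range (i+1)).map Nat.succ :=
        List.range_succ_eq_map
      rw [hr]
      simp only [List.map_cons, List.map_map, List.prod_cons]
      have : ((List.range (i+1)).map ((fun j => F - Kt (t + 1 - j) * H * F) ∘ Nat.succ))
          = (List.range (i+1)).map (fun j => F - Kt (t - j) * H * F) := by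
        apply List.map_congr_left
        intro j hj
        simp [Nat.succ_sub_one]
      rw [this]
      rw [Matrix.mulVec_mulVec, hA]
      have h2 : t - 1 - i = t + 1 - 1 - (i+1) := by omega
      rw [h2]
      norm_num
    rw [Finset.sum_congr rfl e1]
    simp only [Nat.add_sub_cancel, Nat.sub_zero]
    abel
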